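/- arXiv:2011.03853 — 2 statements merged into one kernel-verified Lean document; each statement's English description precedes it below -/
import Mathlib

section
/- Under the GT-SAGA setup, for every k ≥ 0: E[‖g^{k+1} − g^k‖²] ≤ 12λ²α²L²·E[‖y^{k+1} − Jy^{k+1}‖²] + 2·E[‖g^k − ∇f(x^k)‖²] + E[‖g^{k+1} − ∇f(x^{k+1})‖²] + 18L²·E[‖x^k − Jx^k‖²] + 6nα²L²·E[‖ḡ^k‖²]. -/
open MeasureTheory ProbabilityTheory Finset Filter
open scoped ENNReal RealInnerProductSpace

noncomputable section

/-- The second largest singular value of a doubly stochastic matrix `w`, realized as the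
operator norm of `w - (1/n) 𝟙ₙ 𝟙ₙᵀ` acting on `EuclideanSpace ℝ (Fin n)`. -/
def secondSV {n : ℕ} (w : Matrix (Fin n) (Fin n) ℝ) : ℝ :=
  ‖LinearMap.toContinuousLinearMap
      (Matrix.toEuclideanLin (w - Matrix.of fun _ _ => (n : ℝ)⁻¹))‖

/-- The average `(1/n) ∑ᵢ vᵢ` of the blocks of a stacked vector `v ∈ ℝ^{np}`. -/
def blockAvg {n p : ℕ} (v : Fin n → EuclideanSpace ℝ (Fin p)) : EuclideanSpace ℝ (Fin p) :=
  (n : ℝ)⁻¹ • ∑ i, v i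

/-- `‖v - J v‖²` for a stacked vector `v ∈ ℝ^{np}`, where `J = ((1/n) 𝟙ₙ 𝟙ₙᵀ) ⊗ Iₚ`. -/
def consSq {n p : ℕ} (v : Fin n → EuclideanSpace ℝ (Fin p)) : ℝ :=
  ∑ i, ‖v i - blockAvg v‖ ^ 2

/-- `(W - J) v`, blockwise, where `W = w ⊗ Iₚ` and `J = ((1/n) 𝟙ₙ 𝟙ₙᵀ) ⊗ Iₚ`. -/
def WJapp {n p : ℕ} (w : Matrix (Fin n) (Fin n) ℝ) (v : Fin n → EuclideanSpace ℝ (Fin p)) :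
    Fin n → EuclideanSpace ℝ (Fin p) :=
  fun i => (∑ r, w i r • v r) - blockAvg v

/-- The local batch function `fᵢ := (1/m) ∑ⱼ f_{i,j}`. -/
def floc {n m p : ℕ} (f : Fin n → Fin m → EuclideanSpace ℝ (Fin p) → ℝ) (i : Fin n) :
    EuclideanSpace ℝ (Fin p) → ℝ :=
  fun u => (m : ℝ)⁻¹ * ∑ j, f i j u

/-- The global function `F := (1/n) ∑ᵢ fᵢ`. -/
def fglob {n m p : ℕ} (f : Fin n → Fin m → EuclideanSpace ℝ (Fin p) → ℝ) :
    EuclideanSpace ℝ (Fin p) → ℝ :=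
  fun u => (n : ℝ)⁻¹ * ∑ i, floc f i u

/-- `F* := inf_x F(x)`. -/
def Fstar {n m p : ℕ} (f : Fin n → Fin m → EuclideanSpace ℝ (Fin p) → ℝ) : ℝ :=
  ⨅ u, fglob f u

/-- `∇f̄(x) := (1/n) ∑ᵢ ∇fᵢ(xᵢ)`. -/
def gradfbar {n m p : ℕ} (f : Fin n → Fin m → EuclideanSpace ℝ (Fin p) → ℝ)
    (v : Fin n → EuclideanSpace ℝ (Fin p)) : EuclideanSpace ℝ (Fin p) :=
  (n : ℝ)⁻¹ • ∑ i, gradient (floc f i) (v i)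

/-- The auxiliary quantity `t := (1/n) ∑ᵢ (1/m) ∑ⱼ ‖x̄ - z_{i,j}‖²`. -/
def tAux {n m p : ℕ} (xbar : EuclideanSpace ℝ (Fin p))
    (z : Fin n → Fin m → EuclideanSpace ℝ (Fin p)) : ℝ :=
  (n : ℝ)⁻¹ * ∑ i, (m : ℝ)⁻¹ * ∑ j, ‖xbar - z i j‖ ^ 2

/-- The filtration `F^k := σ(τᵢᵗ, sᵢᵗ : i ∈ V, t ≤ k-1)`, with `F⁰` trivial. -/
def gtFilt {Ω : Type*} {n m : ℕ} (τ s : Fin n → ℕ → Ω → Fin m) (k : ℕ) :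
    MeasurableSpace Ω :=
  ⨆ (i : Fin n) (t : ℕ) (_ : t < k),
    MeasurableSpace.comap (τ i t) ⊤ ⊔ MeasurableSpace.comap (s i t) ⊤


/-- Auxiliary: the sigma-algebra generated by the sampling variables with time `< k`. -/
def bigG {Ω : Type} [mΩ : MeasurableSpace Ω] {n m : ℕ} (τ s : Fin n → ℕ → Ω → Fin m)
    (k : ℕ) : MeasurableSpace Ω :=
  ⨆ (q : Fin n × ℕ × Bool) (_ : q.2.1 < k),
    MeasurableSpace.comap (fun ω => if q.2.2 then τ q.1 q.2.1 ω else s q.1 q.2.1 ω) ⊤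

namespace GTaux


lemma enorm_sq {q : ℕ} (x : EuclideanSpace ℝ (Fin q)) : ‖x‖ ^ 2 = ∑ c, (x c) ^ 2 := by
  rw [EuclideanSpace.norm_eq, Real.sq_sqrt (by positivity)]
  simp [sq_abs]

lemma four_sq {q : ℕ} (A B C D : EuclideanSpace ℝ (Fin q)) :
    ‖A + B + C + D‖ ^ 2 ≤ 6 * ‖A‖ ^ 2 + 3 * ‖B‖ ^ 2 + 6 * ‖C‖ ^ 2 + 3 * ‖D‖ ^ 2 := by
  have h : ‖A + B + C + D‖ ≤ ‖A‖ + ‖B‖ + ‖C‖ + ‖D‖ :=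
    le_trans (norm_add_le _ _) (by gcongr; exact norm_add₃_le)
  have h2 : ‖A + B + C + D‖ ^ 2 ≤ (‖A‖ + ‖B‖ + ‖C‖ + ‖D‖) ^ 2 := by
    apply pow_le_pow_left₀ (norm_nonneg _) h
  nlinarith [sq_nonneg (‖A‖ - ‖C‖), sq_nonneg (‖B‖ - ‖D‖), sq_nonneg (2*‖A‖ - ‖B‖),
    sq_nonneg (2*‖A‖ - ‖D‖), sq_nonneg (2*‖C‖ - ‖B‖), sq_nonneg (2*‖C‖ - ‖D‖)]

lemma blockAvg_apply {n p : ℕ} (v : Fin n → EuclideanSpace ℝ (Fin p)) (c : Fin p) :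
    blockAvg v c = (n : ℝ)⁻¹ * ∑ i, v i c := by
  show (n : ℝ)⁻¹ • (∑ i, v i) c = _
  rw [WithLp.ofLp_sum, Finset.sum_apply c Finset.univ (fun i => (v i).ofLp)]; rfl

lemma wj_bound {n p : ℕ} (hn : 1 ≤ n) (w : Matrix (Fin n) (Fin n) ℝ)
    (hrow : ∀ i, ∑ r, w i r = 1) (v : Fin n → EuclideanSpace ℝ (Fin p)) :
    ∑ i, ‖WJapp w v i‖ ^ 2 ≤ (secondSV w) ^ 2 * consSq v := by
  classical
  set A : Matrix (Fin n) (Fin n) ℝ := w - Matrix.of fun _ _ => (n : ℝ)⁻¹ with hA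
  set T := LinearMap.toContinuousLinearMap (Matrix.toEuclideanLin A) with hT
  set uc : Fin p → EuclideanSpace ℝ (Fin n) :=
    fun c => (WithLp.equiv 2 (Fin n → ℝ)).symm (fun r => v r c - blockAvg v c) with huc
  have key : ∀ (c : Fin p) (i : Fin n), WJapp w v i c = T (uc c) i := by
    intro c i
    have hTu : T (uc c) i = ∑ r, A i r * (v r c - blockAvg v c) := by
      show (Matrix.toEuclideanLin A) (uc c) i = _
      rw [huc]
      simp [Matrix.toEuclideanLin_apply, Matrix.mulVec, dotProduct]
    have hL : WJapp w v i c = (∑ r, w i r * v r c) - blockAvg v c := by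
      show ((∑ r, w i r • v r) - blockAvg v) c = _
      rw [PiLp.sub_apply, WithLp.ofLp_sum, Finset.sum_apply c Finset.univ (fun r => (w i r • v r).ofLp)]
      rfl
    rw [hL, hTu]
    have h1 : ∑ r, A i r * (v r c - blockAvg v c)
        = (∑ r, w i r * v r c) - (∑ r, w i r) * blockAvg v c
          - (n:ℝ)⁻¹ * (∑ r, v r c) + (n:ℝ)⁻¹ * (n : ℝ) * blockAvg v c := by
      rw [hA]
      simp only [Matrix.sub_apply, Matrix.of_apply]
      rw [Finset.sum_congr rfl (fun r _ => by ring :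
        ∀ r ∈ Finset.univ, ((w i r - (n:ℝ)⁻¹) * (v r c - blockAvg v c))
          = (w i r * v r c - w i r * blockAvg v c - (n:ℝ)⁻¹ * v r c + (n:ℝ)⁻¹ * blockAvg v c))]
      simp [Finset.sum_sub_distrib, Finset.sum_add_distrib, ← Finset.sum_mul, ← Finset.mul_sum]
      ring
    have hnn : (n:ℝ)⁻¹ * (n:ℝ) = 1 := by
      rw [inv_mul_cancel₀]; exact Nat.cast_ne_zero.mpr (by omega)
    rw [h1, hrow i, hnn, blockAvg_apply]; ring
  calc ∑ i, ‖WJapp w v i‖ ^ 2 = ∑ i, ∑ c, (WJapp w v i c)^2 := by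
        exact Finset.sum_congr rfl fun i _ => enorm_sq _
    _ = ∑ c, ∑ i, (T (uc c) i)^2 := by
        rw [Finset.sum_comm]
        exact Finset.sum_congr rfl fun c _ => Finset.sum_congr rfl fun i _ => by rw [key c i]
    _ = ∑ c, ‖T (uc c)‖^2 := Finset.sum_congr rfl fun c _ => (enorm_sq _).symm
    _ ≤ ∑ c, (secondSV w)^2 * ‖uc c‖^2 := by
        apply Finset.sum_le_sum
        intro c _
        have := T.le_opNorm (uc c)
        have h2 : ‖T (uc c)‖^2 ≤ (‖T‖ * ‖uc c‖)^2 := by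
          apply pow_le_pow_left₀ (norm_nonneg _) this
        calc ‖T (uc c)‖^2 ≤ (‖T‖ * ‖uc c‖)^2 := h2
          _ = (secondSV w)^2 * ‖uc c‖^2 := by rw [mul_pow]; rfl
    _ = (secondSV w)^2 * consSq v := by
        rw [← Finset.mul_sum]
        congr 1
        rw [consSq]
        rw [Finset.sum_congr rfl (fun c (_ : c ∈ Finset.univ) => enorm_sq (uc c))]
        rw [Finset.sum_congr rfl (fun i (_ : i ∈ Finset.univ) => enorm_sq (v i - blockAvg v))]
        rw [Finset.sum_comm]
        exact Finset.sum_congr rfl fun i _ => Finset.sum_congr rfl fun c _ => rfl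



lemma floc_grad {n m p : ℕ} (f : Fin n → Fin m → EuclideanSpace ℝ (Fin p) → ℝ)
    (hdiff : ∀ i j, Differentiable ℝ (f i j)) (i : Fin n) (u : EuclideanSpace ℝ (Fin p)) :
    gradient (floc f i) u = (m : ℝ)⁻¹ • ∑ j, gradient (f i j) u := by
  have h1 : ∀ j : Fin m, HasFDerivAt (f i j)
      (InnerProductSpace.toDual ℝ _ (gradient (f i j) u)) u := fun j => by
    have := ((hdiff i j) u).hasGradientAt
    rwa [hasGradientAt_iff_hasFDerivAt] at this
  have h2 : HasFDerivAt (fun u => ∑ j, f i j u)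
      (∑ j, InnerProductSpace.toDual ℝ _ (gradient (f i j) u)) u :=
    HasFDerivAt.fun_sum (fun j _ => h1 j)
  have h3 := h2.const_mul ((m:ℝ)⁻¹)
  have h4 : HasGradientAt (floc f i) ((m : ℝ)⁻¹ • ∑ j, gradient (f i j) u) u := by
    rw [hasGradientAt_iff_hasFDerivAt, _root_.map_smul, map_sum]
    exact h3
  exact h4.gradient

lemma floc_grad_lip {n m p : ℕ} (hm : 1 ≤ m) {L : ℝ} (hL : 0 < L)
    (f : Fin n → Fin m → EuclideanSpace ℝ (Fin p) → ℝ)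
    (hdiff : ∀ i j, Differentiable ℝ (f i j))
    (hlip : ∀ i j, LipschitzWith L.toNNReal (gradient (f i j))) (i : Fin n) :
    LipschitzWith L.toNNReal (gradient (floc f i)) := by
  apply LipschitzWith.of_dist_le_mul
  intro u v
  rw [dist_eq_norm, Real.coe_toNNReal _ hL.le, dist_eq_norm,
    floc_grad f hdiff i u, floc_grad f hdiff i v, ← smul_sub, ← Finset.sum_sub_distrib]
  have hb : ‖∑ j : Fin m, (gradient (f i j) u - gradient (f i j) v)‖ ≤ (m : ℝ) * (L * ‖u - v‖) := by
    refine le_trans (norm_sum_le _ _) ?_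
    have : ∀ j : Fin m, ‖gradient (f i j) u - gradient (f i j) v‖ ≤ L * ‖u - v‖ := fun j => by
      have := (hlip i j).dist_le_mul u v
      rwa [dist_eq_norm, dist_eq_norm, Real.coe_toNNReal _ hL.le] at this
    calc ∑ j : Fin m, ‖gradient (f i j) u - gradient (f i j) v‖ ≤ ∑ _j : Fin m, L * ‖u - v‖ :=
          Finset.sum_le_sum fun j _ => this j
      _ = (m : ℝ) * (L * ‖u - v‖) := by simp [Finset.sum_const, nsmul_eq_mul]
  rw [norm_smul]
  have hmn : ‖(m:ℝ)⁻¹‖ = (m:ℝ)⁻¹ := by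
    rw [Real.norm_eq_abs, abs_of_nonneg (by positivity)]
  rw [hmn]
  calc (m:ℝ)⁻¹ * ‖∑ j : Fin m, (gradient (f i j) u - gradient (f i j) v)‖
      ≤ (m:ℝ)⁻¹ * ((m : ℝ) * (L * ‖u - v‖)) := by
        apply mul_le_mul_of_nonneg_left hb (by positivity)
    _ = L * ‖u - v‖ := by
        rw [← mul_assoc, inv_mul_cancel₀ (Nat.cast_ne_zero.mpr (by omega)), one_mul]

lemma memLp_lip_comp {Ω : Type*} [MeasurableSpace Ω] {P : Measure Ω} [IsProbabilityMeasure P]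
    {q : ℕ} {g : EuclideanSpace ℝ (Fin q) → EuclideanSpace ℝ (Fin q)} {K : NNReal}
    (hg : LipschitzWith K g) {X : Ω → EuclideanSpace ℝ (Fin q)} (hX : MemLp X 2 P) :
    MemLp (fun ω => g (X ω)) 2 P := by
  have h1 : LipschitzWith K (fun u => g u - g 0) := fun a b => by
    simpa [edist_sub_right] using hg a b
  have h2 := h1.comp_memLp (by simp) hX
  have heq : (fun ω => g (X ω)) = (fun ω => ((fun u => g u - g 0) ∘ X) ω + g 0) := by
    funext ω; simp [Function.comp]
  rw [heq]
  exact h2.add (memLp_const _)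

lemma integrable_inner_of_memLp {Ω : Type*} [MeasurableSpace Ω] {P : Measure Ω} {q : ℕ}
    {F G : Ω → EuclideanSpace ℝ (Fin q)} (hF : MemLp F 2 P) (hG : MemLp G 2 P) :
    Integrable (fun ω => ⟪F ω, G ω⟫) P := by
  have h := MeasureTheory.L2.integrable_inner (𝕜 := ℝ) (hF.toLp F) (hG.toLp G)
  apply h.congr
  filter_upwards [hF.coeFn_toLp, hG.coeFn_toLp] with ω h1 h2
  rw [h1, h2]

lemma indep_mono {Ω : Type*} {mΩ : MeasurableSpace Ω} {P : Measure Ω}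
    {m1 m2 m1' m2' : MeasurableSpace Ω}
    (h : Indep m1 m2 P) (h1 : m1' ≤ m1) (h2 : m2' ≤ m2) : Indep m1' m2' P := by
  rw [Indep_iff] at h ⊢
  exact fun t1 t2 ht1 ht2 => h t1 t2 (h1 _ ht1) (h2 _ ht2)

lemma setIntegral_indep {Ω : Type*} [mΩ : MeasurableSpace Ω] {P : Measure Ω}
    [IsProbabilityMeasure P] {A : Set Ω} (hAm : MeasurableSet A)
    {h : Ω → ℝ} (hint : Integrable h P)
    (hIndF : IndepFun (A.indicator (fun _ => (1:ℝ))) h P) :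
    ∫ ω in A, h ω ∂P = (P A).toReal * ∫ ω, h ω ∂P := by
  have hintInd : Integrable (A.indicator fun _ => (1:ℝ)) P :=
    (integrable_const 1).indicator hAm
  have hmul := hIndF.integral_fun_mul_eq_mul_integral hintInd.aestronglyMeasurable hint.aestronglyMeasurable
  have heq : (fun ω => A.indicator (fun _ => (1:ℝ)) ω * h ω) = A.indicator h := by
    funext ω; by_cases hω : ω ∈ A <;> simp [hω]
  have hind1 : ∫ ω, A.indicator (fun _ => (1:ℝ)) ω ∂P = (P A).toReal := by
    rw [integral_indicator_const (1:ℝ) hAm]; simp; rfl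
  calc ∫ ω in A, h ω ∂P = ∫ ω, A.indicator h ω ∂P := (integral_indicator hAm).symm
    _ = ∫ ω, A.indicator (fun _ => (1:ℝ)) ω * h ω ∂P := by rw [heq]
    _ = (∫ ω, A.indicator (fun _ => (1:ℝ)) ω ∂P) * ∫ ω, h ω ∂P := hmul
    _ = (P A).toReal * ∫ ω, h ω ∂P := by rw [hind1]



lemma blockAvg_swap {n p : ℕ} (w : Matrix (Fin n) (Fin n) ℝ) (hcol : ∀ r, ∑ i, w i r = 1)
    (c : Fin n → EuclideanSpace ℝ (Fin p)) :
    blockAvg (fun i => ∑ r, w i r • c r) = blockAvg c := by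
  unfold blockAvg
  congr 1
  rw [Finset.sum_comm]
  refine Finset.sum_congr rfl fun r _ => ?_
  rw [← Finset.sum_smul, hcol r, one_smul]

lemma track {Ω : Type*} {n p : ℕ} (w : Matrix (Fin n) (Fin n) ℝ)
    (hcol : ∀ r, ∑ i, w i r = 1)
    (y g : ℕ → Fin n → Ω → EuclideanSpace ℝ (Fin p))
    (hy0 : ∀ i ω, y 0 i ω = 0)
    (hydef : ∀ k i ω, y (k + 1) i ω =
      ∑ r, w i r • (y k r ω + g k r ω - (if k = 0 then 0 else g (k - 1) r ω))) :
    ∀ (K : ℕ) (ω : Ω), blockAvg (fun i => y (K + 1) i ω) = blockAvg (fun i => g K i ω) := by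
  intro K
  induction K with
  | zero =>
    intro ω
    have h1 : (fun i => y 1 i ω) = fun i => ∑ r, w i r • (g 0 r ω) := by
      funext i; rw [hydef 0 i ω]
      exact Finset.sum_congr rfl fun r _ => by rw [hy0, if_pos rfl]; simp
    rw [h1, blockAvg_swap w hcol]
  | succ K ih =>
    intro ω
    have h1 : (fun i => y (K + 2) i ω)
        = fun i => ∑ r, w i r • (y (K+1) r ω + g (K+1) r ω - g K r ω) := by
      funext i; rw [hydef (K+1) i ω]
      exact Finset.sum_congr rfl fun r _ => by
        rw [if_neg (Nat.succ_ne_zero K)]; simp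
    rw [h1, blockAvg_swap w hcol]
    have hadd : blockAvg (fun r => y (K+1) r ω + g (K+1) r ω - g K r ω)
        = blockAvg (fun r => y (K+1) r ω) + blockAvg (fun r => g (K+1) r ω)
          - blockAvg (fun r => g K r ω) := by
      unfold blockAvg
      rw [← smul_add, ← smul_sub]
      congr 1
      rw [Finset.sum_sub_distrib, Finset.sum_add_distrib]
    rw [hadd, ih ω]
    abel

lemma deltax_bound {n p : ℕ} (hn : 1 ≤ n) (w : Matrix (Fin n) (Fin n) ℝ)
    (hrow : ∀ i, ∑ r, w i r = 1)
    {lam : ℝ} (hlam : lam = secondSV w) (hlam0 : 0 ≤ lam) (hlam1 : lam < 1)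
    {α : ℝ} (hα0 : 0 < α)
    (u v x1 : Fin n → EuclideanSpace ℝ (Fin p))
    (hx1 : ∀ i, x1 i = ∑ r, w i r • (u r - α • v r)) :
    ∑ i, ‖x1 i - u i‖ ^ 2
      ≤ 9 * consSq u + 6 * α ^ 2 * lam ^ 2 * consSq v + 3 * α ^ 2 * n * ‖blockAvg v‖ ^ 2 := by
  have hdecomp : ∀ i, x1 i - u i
      = WJapp w u i + (blockAvg u - u i) + ((-α) • WJapp w v i) + ((-α) • blockAvg v) := by
    intro i
    rw [hx1 i]
    have hsum : ∑ r, w i r • (u r - α • v r)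
        = (∑ r, w i r • u r) - α • ∑ r, w i r • v r := by
      rw [Finset.smul_sum, ← Finset.sum_sub_distrib]
      refine Finset.sum_congr rfl fun r _ => ?_
      rw [smul_sub, smul_comm]
    rw [hsum]
    unfold WJapp
    simp only [neg_smul, smul_sub]
    abel
  have hptw : ∀ i, ‖x1 i - u i‖ ^ 2
      ≤ 6 * ‖WJapp w u i‖ ^ 2 + 3 * ‖u i - blockAvg u‖ ^ 2
        + 6 * α ^ 2 * ‖WJapp w v i‖ ^ 2 + 3 * α ^ 2 * ‖blockAvg v‖ ^ 2 := by
    intro i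
    rw [hdecomp i]
    have h4 := four_sq (WJapp w u i) (blockAvg u - u i) ((-α) • WJapp w v i) ((-α) • blockAvg v)
    have e1 : ‖blockAvg u - u i‖ = ‖u i - blockAvg u‖ := norm_sub_rev _ _
    have e2 : ‖(-α) • WJapp w v i‖ ^ 2 = α ^ 2 * ‖WJapp w v i‖ ^ 2 := by
      rw [norm_smul]; rw [Real.norm_eq_abs, abs_neg, abs_of_pos hα0]; ring
    have e3 : ‖(-α) • blockAvg v‖ ^ 2 = α ^ 2 * ‖blockAvg v‖ ^ 2 := by
      rw [norm_smul]; rw [Real.norm_eq_abs, abs_neg, abs_of_pos hα0]; ring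
    calc ‖WJapp w u i + (blockAvg u - u i) + (-α) • WJapp w v i + (-α) • blockAvg v‖ ^ 2
        ≤ 6 * ‖WJapp w u i‖ ^ 2 + 3 * ‖blockAvg u - u i‖ ^ 2
          + 6 * ‖(-α) • WJapp w v i‖ ^ 2 + 3 * ‖(-α) • blockAvg v‖ ^ 2 := h4
      _ = 6 * ‖WJapp w u i‖ ^ 2 + 3 * ‖u i - blockAvg u‖ ^ 2
          + 6 * α ^ 2 * ‖WJapp w v i‖ ^ 2 + 3 * α ^ 2 * ‖blockAvg v‖ ^ 2 := by
          rw [e1, e2, e3]; ring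
  have hsum := Finset.sum_le_sum (fun i (_ : i ∈ Finset.univ) => hptw i)
  have hwu := wj_bound hn w hrow u
  have hwv := wj_bound hn w hrow v
  rw [← hlam] at hwu hwv
  have hexp : ∑ i, (6 * ‖WJapp w u i‖ ^ 2 + 3 * ‖u i - blockAvg u‖ ^ 2
        + 6 * α ^ 2 * ‖WJapp w v i‖ ^ 2 + 3 * α ^ 2 * ‖blockAvg v‖ ^ 2)
      = 6 * (∑ i, ‖WJapp w u i‖ ^ 2) + 3 * consSq u
        + 6 * α ^ 2 * (∑ i, ‖WJapp w v i‖ ^ 2) + 3 * α ^ 2 * (n * ‖blockAvg v‖ ^ 2) := by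
    rw [Finset.sum_add_distrib, Finset.sum_add_distrib, Finset.sum_add_distrib,
      ← Finset.mul_sum, ← Finset.mul_sum, ← Finset.mul_sum, Finset.sum_const]
    unfold consSq
    simp [nsmul_eq_mul]
    ring
  have hlamsq : lam ^ 2 ≤ 1 := by nlinarith
  have hcu : 0 ≤ consSq u := Finset.sum_nonneg fun i _ => sq_nonneg _
  calc ∑ i, ‖x1 i - u i‖ ^ 2 ≤ ∑ i, (6 * ‖WJapp w u i‖ ^ 2 + 3 * ‖u i - blockAvg u‖ ^ 2
        + 6 * α ^ 2 * ‖WJapp w v i‖ ^ 2 + 3 * α ^ 2 * ‖blockAvg v‖ ^ 2) := hsum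
    _ = 6 * (∑ i, ‖WJapp w u i‖ ^ 2) + 3 * consSq u
        + 6 * α ^ 2 * (∑ i, ‖WJapp w v i‖ ^ 2) + 3 * α ^ 2 * (n * ‖blockAvg v‖ ^ 2) := hexp
    _ ≤ 6 * (lam ^ 2 * consSq u) + 3 * consSq u
        + 6 * α ^ 2 * (lam ^ 2 * consSq v) + 3 * α ^ 2 * (n * ‖blockAvg v‖ ^ 2) := by
        gcongr
    _ ≤ 9 * consSq u + 6 * α ^ 2 * lam ^ 2 * consSq v + 3 * α ^ 2 * n * ‖blockAvg v‖ ^ 2 := by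
        nlinarith [sq_nonneg lam, hcu]



lemma cross_zero {Ω : Type} [mΩ : MeasurableSpace Ω] (P : Measure Ω) [IsProbabilityMeasure P]
    {m q : ℕ} (hm : 1 ≤ m) {L : ℝ} (hL : 0 < L)
    (grads : Fin m → EuclideanSpace ℝ (Fin q) → EuclideanSpace ℝ (Fin q))
    (hgradlip : ∀ j, LipschitzWith L.toNNReal (grads j))
    (Gf : EuclideanSpace ℝ (Fin q) → EuclideanSpace ℝ (Fin q))
    (hGf : ∀ u, Gf u = (m : ℝ)⁻¹ • ∑ j, grads j u)
    (hGflip : LipschitzWith L.toNNReal Gf)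
    (𝒢 : {mm : MeasurableSpace Ω // mm ≤ mΩ})
    (τk : Ω → Fin m) (hτmeas : Measurable τk)
    (hτunif : ∀ j, P {ω | τk ω = j} = (m : ℝ≥0∞)⁻¹)
    (hIndep : Indep 𝒢.1 (MeasurableSpace.comap τk ⊤) P)
    (X : Ω → EuclideanSpace ℝ (Fin q)) (Z : Fin m → Ω → EuclideanSpace ℝ (Fin q))
    (B : Ω → EuclideanSpace ℝ (Fin q))
    (hXmeas : Measurable[𝒢.1] X) (hZmeas : ∀ j, Measurable[𝒢.1] (Z j))
    (hBmeas : Measurable[𝒢.1] B)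
    (hXL2 : MemLp X 2 P) (hZL2 : ∀ j, MemLp (Z j) 2 P) (hBL2 : MemLp B 2 P) :
    ∫ ω, ⟪(grads (τk ω) (X ω) - grads (τk ω) (Z (τk ω) ω)
      + (m : ℝ)⁻¹ • ∑ j, grads j (Z j ω)) - Gf (X ω), B ω⟫ ∂P = 0 := by
  classical
  have hm0 : (m : ℝ) ≠ 0 := Nat.cast_ne_zero.mpr (by omega)
  set D : Fin m → Ω → EuclideanSpace ℝ (Fin q) := fun j ω =>
    (grads j (X ω) - grads j (Z j ω) + (m : ℝ)⁻¹ • ∑ j', grads j' (Z j' ω)) - Gf (X ω)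
    with hD
  -- sum of D is zero
  have hDsum : ∀ ω, ∑ j, D j ω = 0 := by
    intro ω
    rw [hD]
    simp only
    rw [Finset.sum_sub_distrib, Finset.sum_add_distrib, Finset.sum_sub_distrib,
      Finset.sum_const, Finset.sum_const, Finset.card_univ, Fintype.card_fin]
    have h1 : m • ((m : ℝ)⁻¹ • ∑ j', grads j' (Z j' ω)) = ∑ j', grads j' (Z j' ω) := by
      rw [← Nat.cast_smul_eq_nsmul ℝ, smul_smul, mul_inv_cancel₀ hm0, one_smul]
    have h2 : m • Gf (X ω) = ∑ j', grads j' (X ω) := by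
      rw [hGf, ← Nat.cast_smul_eq_nsmul ℝ, smul_smul, mul_inv_cancel₀ hm0, one_smul]
    rw [h1, h2]
    abel
  -- measurability and integrability of the inner products
  have hDmeas : ∀ j, Measurable[𝒢.1] (D j) := by
    intro j
    apply Measurable.sub
    · apply Measurable.add
      · exact ((hgradlip j).continuous.measurable.comp hXmeas).sub
          ((hgradlip j).continuous.measurable.comp (hZmeas j))
      · exact Measurable.const_smul (Finset.measurable_sum Finset.univ fun j' _ =>
          (hgradlip j').continuous.measurable.comp (hZmeas j')) ((m:ℝ)⁻¹)
    · exact hGflip.continuous.measurable.comp hXmeas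
  have hDL2 : ∀ j, MemLp (D j) 2 P := by
    intro j
    apply MemLp.sub
    · apply MemLp.add
      · exact (memLp_lip_comp (hgradlip j) hXL2).sub (memLp_lip_comp (hgradlip j) (hZL2 j))
      · have hs := (memLp_finsetSum' Finset.univ fun (j' : Fin m) (_ : j' ∈ Finset.univ) =>
          memLp_lip_comp (hgradlip j') (hZL2 j')).const_smul ((m:ℝ)⁻¹)
        refine MemLp.ae_eq (Filter.Eventually.of_forall fun ω => ?_) hs
        simp [Finset.sum_apply]
    · exact memLp_lip_comp hGflip hXL2
  set h : Fin m → Ω → ℝ := fun j ω => ⟪D j ω, B ω⟫ with hh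
  have hmeas_h : ∀ j, Measurable[𝒢.1] (h j) := fun j => (hDmeas j).inner hBmeas
  have hint_h : ∀ j, Integrable (h j) P := fun j => integrable_inner_of_memLp (hDL2 j) hBL2
  set A : Fin m → Set Ω := fun j => {ω | τk ω = j} with hA
  have hAcomap : ∀ j, MeasurableSet[MeasurableSpace.comap τk ⊤] (A j) := by
    intro j
    refine ⟨{j}, trivial, ?_⟩
    ext ω; simp [hA]
  have hAm : ∀ j, MeasurableSet (A j) := fun j => by
    have : A j = τk ⁻¹' {j} := by ext ω; simp [hA]
    rw [this]; exact hτmeas (measurableSet_singleton j)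
  -- pointwise decomposition of the integrand
  have hptw : ∀ ω, ⟪(grads (τk ω) (X ω) - grads (τk ω) (Z (τk ω) ω)
      + (m : ℝ)⁻¹ • ∑ j, grads j (Z j ω)) - Gf (X ω), B ω⟫
      = ∑ j, (A j).indicator (fun _ => (1:ℝ)) ω * h j ω := by
    intro ω
    have hval : ((grads (τk ω) (X ω) - grads (τk ω) (Z (τk ω) ω)
        + (m : ℝ)⁻¹ • ∑ j, grads j (Z j ω)) - Gf (X ω)) = D (τk ω) ω := rfl
    rw [hval]
    rw [Finset.sum_eq_single (τk ω)]
    · have : ω ∈ A (τk ω) := by simp [hA]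
      rw [Set.indicator_of_mem this, one_mul]
    · intro j _ hj
      have : ω ∉ A j := by simp [hA]; exact fun hc => hj hc.symm
      rw [Set.indicator_of_notMem this, zero_mul]
    · intro hc; exact absurd (Finset.mem_univ _) hc
  -- integrate
  have hint_ind : ∀ j, Integrable (fun ω => (A j).indicator (fun _ => (1:ℝ)) ω * h j ω) P := by
    intro j
    have : (fun ω => (A j).indicator (fun _ => (1:ℝ)) ω * h j ω) = (A j).indicator (h j) := by
      funext ω; by_cases hω : ω ∈ A j <;> simp [hω]
    rw [this]
    exact (hint_h j).indicator (hAm j)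
  calc ∫ ω, ⟪(grads (τk ω) (X ω) - grads (τk ω) (Z (τk ω) ω)
        + (m : ℝ)⁻¹ • ∑ j, grads j (Z j ω)) - Gf (X ω), B ω⟫ ∂P
      = ∫ ω, ∑ j, (A j).indicator (fun _ => (1:ℝ)) ω * h j ω ∂P := by
        exact integral_congr_ae (Filter.Eventually.of_forall hptw)
    _ = ∑ j, ∫ ω, (A j).indicator (fun _ => (1:ℝ)) ω * h j ω ∂P :=
        integral_finset_sum _ fun j _ => hint_ind j
    _ = ∑ j, (m : ℝ)⁻¹ * ∫ ω, h j ω ∂P := by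
        refine Finset.sum_congr rfl fun j _ => ?_
        have heq : (fun ω => (A j).indicator (fun _ => (1:ℝ)) ω * h j ω)
            = (A j).indicator (h j) := by
          funext ω; by_cases hω : ω ∈ A j <;> simp [hω]
        rw [heq, integral_indicator (hAm j)]
        have hIndF : IndepFun ((A j).indicator (fun _ => (1:ℝ))) (h j) P := by
          have hi : Measurable[MeasurableSpace.comap τk ⊤]
              ((A j).indicator (fun _ => (1:ℝ))) :=
            (@measurable_const ℝ Ω _ (MeasurableSpace.comap τk ⊤) 1).indicator (hAcomap j)
          exact indep_mono hIndep.symm (Measurable.comap_le hi) (Measurable.comap_le (hmeas_h j))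
        rw [setIntegral_indep (hAm j) (hint_h j) hIndF]
        congr 1
        rw [show P (A j) = (m : ℝ≥0∞)⁻¹ from hτunif j]
        rw [ENNReal.toReal_inv]
        simp
    _ = (m : ℝ)⁻¹ * ∑ j, ∫ ω, h j ω ∂P := by rw [Finset.mul_sum]
    _ = (m : ℝ)⁻¹ * ∫ ω, ∑ j, h j ω ∂P := by rw [integral_finset_sum _ fun j _ => hint_h j]
    _ = 0 := by
        have : ∀ ω, ∑ j, h j ω = 0 := by
          intro ω
          rw [hh]
          simp only
          rw [← sum_inner, hDsum ω, inner_zero_left]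
        rw [integral_congr_ae (Filter.Eventually.of_forall this)]
        simp



lemma bigG_le {Ω : Type} [mΩ : MeasurableSpace Ω] {n m : ℕ} (τ s : Fin n → ℕ → Ω → Fin m)
    (hτmeas : ∀ i k, Measurable (τ i k)) (hsmeas : ∀ i k, Measurable (s i k)) (k : ℕ) :
    bigG τ s k ≤ mΩ := by
  apply iSup_le; intro q; apply iSup_le; intro _
  apply Measurable.comap_le
  rcases q with ⟨i, t, b⟩
  cases b
  · simpa using hsmeas i t
  · simpa using hτmeas i t

lemma tau_meas_bigG {Ω : Type} [mΩ : MeasurableSpace Ω] {n m : ℕ}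
    (τ s : Fin n → ℕ → Ω → Fin m) {k t : ℕ} (ht : t < k) (i : Fin n) :
    Measurable[bigG τ s k] (τ i t) := by
  apply Measurable.of_comap_le
  have heq : (fun ω => if (((i, (t, true)) : Fin n × ℕ × Bool)).2.2
      then τ (((i, (t, true)) : Fin n × ℕ × Bool)).1 (((i, (t, true)) : Fin n × ℕ × Bool)).2.1 ω
      else s (((i, (t, true)) : Fin n × ℕ × Bool)).1 (((i, (t, true)) : Fin n × ℕ × Bool)).2.1 ω)
      = τ i t := by funext ω; simp
  calc MeasurableSpace.comap (τ i t) ⊤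
      = MeasurableSpace.comap (fun ω => if (((i, (t, true)) : Fin n × ℕ × Bool)).2.2
          then τ (((i, (t, true)) : Fin n × ℕ × Bool)).1
            (((i, (t, true)) : Fin n × ℕ × Bool)).2.1 ω
          else s (((i, (t, true)) : Fin n × ℕ × Bool)).1
            (((i, (t, true)) : Fin n × ℕ × Bool)).2.1 ω) ⊤ := by rw [heq]
    _ ≤ bigG τ s k := le_iSup_of_le ((i, (t, true))) (le_iSup_of_le ht le_rfl)

lemma s_meas_bigG {Ω : Type} [mΩ : MeasurableSpace Ω] {n m : ℕ}
    (τ s : Fin n → ℕ → Ω → Fin m) {k t : ℕ} (ht : t < k) (i : Fin n) :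
    Measurable[bigG τ s k] (s i t) := by
  apply Measurable.of_comap_le
  have heq : (fun ω => if (((i, (t, false)) : Fin n × ℕ × Bool)).2.2
      then τ (((i, (t, false)) : Fin n × ℕ × Bool)).1 (((i, (t, false)) : Fin n × ℕ × Bool)).2.1 ω
      else s (((i, (t, false)) : Fin n × ℕ × Bool)).1
        (((i, (t, false)) : Fin n × ℕ × Bool)).2.1 ω)
      = s i t := by funext ω; simp
  calc MeasurableSpace.comap (s i t) ⊤
      = MeasurableSpace.comap (fun ω => if (((i, (t, false)) : Fin n × ℕ × Bool)).2.2
          then τ (((i, (t, false)) : Fin n × ℕ × Bool)).1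
            (((i, (t, false)) : Fin n × ℕ × Bool)).2.1 ω
          else s (((i, (t, false)) : Fin n × ℕ × Bool)).1
            (((i, (t, false)) : Fin n × ℕ × Bool)).2.1 ω) ⊤ := by rw [heq]
    _ ≤ bigG τ s k := le_iSup_of_le ((i, (t, false))) (le_iSup_of_le ht le_rfl)

lemma indep_bigG {Ω : Type} [mΩ : MeasurableSpace Ω] {P : Measure Ω} [IsProbabilityMeasure P]
    {n m : ℕ} (τ s : Fin n → ℕ → Ω → Fin m)
    (hτmeas : ∀ i k, Measurable (τ i k)) (hsmeas : ∀ i k, Measurable (s i k))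
    (hindep : iIndepFun (m := fun _ : Fin n × ℕ × Bool => (inferInstance : MeasurableSpace (Fin m)))
      (fun q ω => if q.2.2 then τ q.1 q.2.1 ω else s q.1 q.2.1 ω) P)
    (i : Fin n) (k : ℕ) :
    Indep (bigG τ s (k + 1)) (MeasurableSpace.comap (τ i (k + 1)) ⊤) P := by
  have hTmeas : ∀ q : Fin n × ℕ × Bool,
      Measurable (fun ω => if q.2.2 then τ q.1 q.2.1 ω else s q.1 q.2.1 ω) := by
    intro ⟨i', t', b⟩
    cases b
    · simpa using hsmeas i' t'
    · simpa using hτmeas i' t'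
  have hdisj : Disjoint {q : Fin n × ℕ × Bool | q.2.1 < k + 1}
      ({((i, (k + 1, true)))} : Set (Fin n × ℕ × Bool)) := by
    rw [Set.disjoint_singleton_right]
    simp
  have h := indep_iSup_of_disjoint
    (fun q => (hTmeas q).comap_le) hindep.iIndep hdisj
  convert h using 1
  · rfl
  · rw [_root_.iSup_singleton]
    rfl



lemma meas_induction {Ω : Type} [mΩ : MeasurableSpace Ω]
    {n m p : ℕ}
    {L : ℝ} (hL : 0 < L)
    (f : Fin n → Fin m → EuclideanSpace ℝ (Fin p) → ℝ)
    (hlip : ∀ i j, LipschitzWith L.toNNReal (gradient (f i j)))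
    (w : Matrix (Fin n) (Fin n) ℝ)
    (τ s : Fin n → ℕ → Ω → Fin m)
    (α : ℝ)
    (x y g : ℕ → Fin n → Ω → EuclideanSpace ℝ (Fin p))
    (z : ℕ → Fin n → Fin m → Ω → EuclideanSpace ℝ (Fin p))
    (x0 : EuclideanSpace ℝ (Fin p))
    (hx0 : ∀ i ω, x 0 i ω = x0)
    (hz0 : ∀ i j ω, z 0 i j ω = x0)
    (hy0 : ∀ i ω, y 0 i ω = 0)
    (hgdef : ∀ k i ω, g k i ω =
      gradient (f i (τ i k ω)) (x k i ω) - gradient (f i (τ i k ω)) (z k i (τ i k ω) ω)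
        + (m : ℝ)⁻¹ • ∑ j, gradient (f i j) (z k i j ω))
    (hydef : ∀ k i ω, y (k + 1) i ω =
      ∑ r, w i r • (y k r ω + g k r ω - (if k = 0 then 0 else g (k - 1) r ω)))
    (hxdef : ∀ k i ω, x (k + 1) i ω = ∑ r, w i r • (x k r ω - α • y (k + 1) r ω))
    (hzdef : ∀ k i j ω, z (k + 1) i j ω = if j = s i k ω then x k i ω else z k i j ω)
    (k : ℕ) :
    ∀ t, t ≤ k + 1 →
      (∀ i, Measurable[bigG τ s (k+1)] (x t i)) ∧
      (∀ i, Measurable[bigG τ s (k+1)] (y t i)) ∧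
      (∀ i j, Measurable[bigG τ s (k+1)] (z t i j)) ∧
      (1 ≤ t → ∀ i, Measurable[bigG τ s (k+1)] (g (t - 1) i)) := by
  intro t
  induction t with
  | zero =>
    intro _
    refine ⟨fun i => ?_, fun i => ?_, fun i j => ?_, fun h => absurd h (by omega)⟩
    · have : x 0 i = fun _ => x0 := funext (hx0 i)
      rw [this]; exact measurable_const
    · have : y 0 i = fun _ => 0 := funext (hy0 i)
      rw [this]; exact measurable_const
    · have : z 0 i j = fun _ => x0 := funext (hz0 i j)
      rw [this]; exact measurable_const
  | succ t ih =>
    intro ht1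
    have htk : t < k + 1 := by omega
    obtain ⟨hx', hy', hz', hg'⟩ := ih (by omega)
    have hgrad_meas : ∀ (i : Fin n) (j : Fin m) (X : Ω → EuclideanSpace ℝ (Fin p)),
        Measurable[bigG τ s (k+1)] X →
        Measurable[bigG τ s (k+1)] (fun ω => gradient (f i j) (X ω)) := by
      intro i j X hX
      exact (hlip i j).continuous.measurable.comp hX
    have htau_set : ∀ (i : Fin n) (j : Fin m),
        MeasurableSet[bigG τ s (k+1)] {ω | τ i t ω = j} := by
      intro i j
      have : {ω | τ i t ω = j} = τ i t ⁻¹' {j} := by ext ω; simp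
      rw [this]
      exact tau_meas_bigG τ s htk i (measurableSet_singleton j)
    -- measurability of g t
    have hgt : ∀ i, Measurable[bigG τ s (k+1)] (g t i) := by
      intro i
      have hrepr : g t i = fun ω => ∑ j, if τ i t ω = j then
          (gradient (f i j) (x t i ω) - gradient (f i j) (z t i j ω)
            + (m : ℝ)⁻¹ • ∑ j', gradient (f i j') (z t i j' ω)) else 0 := by
        funext ω
        rw [hgdef t i ω]
        rw [Finset.sum_eq_single (τ i t ω)
          (fun j _ hj => if_neg (fun hc => hj hc.symm))
          (fun hc => absurd (Finset.mem_univ _) hc), if_pos rfl]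
      rw [hrepr]
      apply Finset.measurable_sum
      intro j _
      apply Measurable.ite (htau_set i j)
      · apply Measurable.add
        · exact (hgrad_meas i j _ (hx' i)).sub (hgrad_meas i j _ (hz' i j))
        · exact Measurable.const_smul (Finset.measurable_sum Finset.univ fun j' _ =>
            hgrad_meas i j' _ (hz' i j')) ((m:ℝ)⁻¹)
      · exact measurable_const
    -- measurability of y (t+1)
    have hyt : ∀ i, Measurable[bigG τ s (k+1)] (y (t+1) i) := by
      intro i
      have hrepr : y (t+1) i = fun ω =>
          ∑ r, w i r • (y t r ω + g t r ω - (if t = 0 then 0 else g (t - 1) r ω)) :=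
        funext fun ω => hydef t i ω
      rw [hrepr]
      apply Finset.measurable_sum
      intro r _
      apply (measurable_const_smul (w i r)).comp
      apply Measurable.sub
      · exact (hy' r).add (hgt r)
      · by_cases ht0 : t = 0
        · simp only [ht0, if_pos rfl]; exact measurable_const
        · simp only [if_neg ht0]; exact hg' (by omega) r
    -- measurability of x (t+1)
    have hxt : ∀ i, Measurable[bigG τ s (k+1)] (x (t+1) i) := by
      intro i
      have hrepr : x (t+1) i = fun ω => ∑ r, w i r • (x t r ω - α • y (t+1) r ω) :=
        funext fun ω => hxdef t i ω
      rw [hrepr]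
      apply Finset.measurable_sum
      intro r _
      exact Measurable.const_smul ((hx' r).sub (Measurable.const_smul (hyt r) α)) (w i r)
    -- measurability of z (t+1)
    have hzt : ∀ i j, Measurable[bigG τ s (k+1)] (z (t+1) i j) := by
      intro i j
      have hrepr : z (t+1) i j = fun ω => if j = s i t ω then x t i ω else z t i j ω :=
        funext fun ω => hzdef t i j ω
      rw [hrepr]
      have hset : MeasurableSet[bigG τ s (k+1)] {ω | j = s i t ω} := by
        have : {ω | j = s i t ω} = s i t ⁻¹' {x | j = x} := by ext ω; simp [eq_comm]
        rw [this]
        have hsing : MeasurableSet ({x | j = x} : Set (Fin m)) := by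
          have : ({x | j = x} : Set (Fin m)) = {j} := by ext x; simp [eq_comm]
          rw [this]; exact measurableSet_singleton j
        exact s_meas_bigG τ s htk i hsing
      exact Measurable.ite hset (hx' i) (hz' i j)
    exact ⟨hxt, hyt, hzt, fun _ i => by simpa using hgt i⟩


lemma two_sq {q : ℕ} (u v : EuclideanSpace ℝ (Fin q)) :
    ‖u + v‖ ^ 2 ≤ 2 * ‖u‖ ^ 2 + 2 * ‖v‖ ^ 2 := by
  have h := norm_add_le u v
  have h2 : ‖u + v‖ ^ 2 ≤ (‖u‖ + ‖v‖) ^ 2 := by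
    apply pow_le_pow_left₀ (norm_nonneg _) h
  nlinarith [sq_nonneg (‖u‖ - ‖v‖)]

lemma blockAvg_memLp {Ω : Type} [MeasurableSpace Ω] {P : Measure Ω} {n p : ℕ}
    (v : Fin n → Ω → EuclideanSpace ℝ (Fin p)) (h : ∀ i, MemLp (v i) 2 P) :
    MemLp (fun ω => blockAvg (fun i => v i ω)) 2 P := by
  have hs := (memLp_finsetSum' Finset.univ fun (i : Fin n) (_ : i ∈ Finset.univ) =>
    h i).const_smul ((n : ℝ)⁻¹)
  refine MemLp.ae_eq (Filter.Eventually.of_forall fun ω => ?_) hs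
  simp [blockAvg, Finset.sum_apply]

lemma consSq_integrable {Ω : Type} [MeasurableSpace Ω] {P : Measure Ω} [IsProbabilityMeasure P]
    {n p : ℕ} (v : Fin n → Ω → EuclideanSpace ℝ (Fin p)) (h : ∀ i, MemLp (v i) 2 P) :
    Integrable (fun ω => consSq (fun i => v i ω)) P := by
  have heq : (fun ω => consSq (fun i => v i ω))
      = fun ω => ∑ i, ‖v i ω - blockAvg (fun i' => v i' ω)‖ ^ 2 := rfl
  rw [heq]
  exact integrable_finset_sum _ fun i _ => ((h i).sub (blockAvg_memLp v h)).norm.integrable_sq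

end GTaux

/-- GT-SAGA: bound on the expected squared difference of successive SAGA estimators. -/
theorem gtsaga_estimator_difference_bound
    {Ω : Type} [MeasurableSpace Ω] (P : Measure Ω) [IsProbabilityMeasure P]
    {n m p : ℕ} (hn : 1 ≤ n) (hm : 1 ≤ m)
    (L : ℝ) (hL : 0 < L)
    (f : Fin n → Fin m → EuclideanSpace ℝ (Fin p) → ℝ)
    (hdiff : ∀ i j, Differentiable ℝ (f i j))
    (hlip : ∀ i j, LipschitzWith L.toNNReal (gradient (f i j)))
    (hFbdd : BddBelow (Set.range (fglob f)))
    (w : Matrix (Fin n) (Fin n) ℝ)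
    (hrow : ∀ i, ∑ r, w i r = 1) (hcol : ∀ r, ∑ i, w i r = 1)
    (lam : ℝ) (hlam : lam = secondSV w) (hlam0 : 0 ≤ lam) (hlam1 : lam < 1)
    (τ s : Fin n → ℕ → Ω → Fin m)
    (hτmeas : ∀ i k, Measurable (τ i k)) (hsmeas : ∀ i k, Measurable (s i k))
    (hτunif : ∀ i k j, P {ω | τ i k ω = j} = (m : ℝ≥0∞)⁻¹)
    (hsunif : ∀ i k j, P {ω | s i k ω = j} = (m : ℝ≥0∞)⁻¹)
    (hindep : iIndepFun (m := fun _ : Fin n × ℕ × Bool => (inferInstance : MeasurableSpace (Fin m)))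
      (fun q ω => if q.2.2 then τ q.1 q.2.1 ω else s q.1 q.2.1 ω) P)
    (α : ℝ) (hα0 : 0 < α)
    (x y g : ℕ → Fin n → Ω → EuclideanSpace ℝ (Fin p))
    (z : ℕ → Fin n → Fin m → Ω → EuclideanSpace ℝ (Fin p))
    (x0 : EuclideanSpace ℝ (Fin p))
    (hx0 : ∀ i ω, x 0 i ω = x0)
    (hz0 : ∀ i j ω, z 0 i j ω = x0)
    (hy0 : ∀ i ω, y 0 i ω = 0)
    (hgdef : ∀ k i ω, g k i ω =
      gradient (f i (τ i k ω)) (x k i ω) - gradient (f i (τ i k ω)) (z k i (τ i k ω) ω)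
        + (m : ℝ)⁻¹ • ∑ j, gradient (f i j) (z k i j ω))
    (hydef : ∀ k i ω, y (k + 1) i ω =
      ∑ r, w i r • (y k r ω + g k r ω - (if k = 0 then 0 else g (k - 1) r ω)))
    (hxdef : ∀ k i ω, x (k + 1) i ω = ∑ r, w i r • (x k r ω - α • y (k + 1) r ω))
    (hzdef : ∀ k i j ω, z (k + 1) i j ω = if j = s i k ω then x k i ω else z k i j ω)
    (hxL2 : ∀ k i, MemLp (x k i) 2 P)
    (hyL2 : ∀ k i, MemLp (y k i) 2 P)
    (hgL2 : ∀ k i, MemLp (g k i) 2 P)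
    (hzL2 : ∀ k i j, MemLp (z k i j) 2 P)
    (k : ℕ) :
    (∫ ω, ∑ i, ‖g (k + 1) i ω - g k i ω‖ ^ 2 ∂P)
      ≤ 12 * lam ^ 2 * α ^ 2 * L ^ 2 * (∫ ω, consSq (fun i => y (k + 1) i ω) ∂P)
        + 2 * (∫ ω, ∑ i, ‖g k i ω - gradient (floc f i) (x k i ω)‖ ^ 2 ∂P)
        + (∫ ω, ∑ i, ‖g (k + 1) i ω - gradient (floc f i) (x (k + 1) i ω)‖ ^ 2 ∂P)
        + 18 * L ^ 2 * (∫ ω, consSq (fun i => x k i ω) ∂P)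
        + 6 * n * α ^ 2 * L ^ 2 * (∫ ω, ‖blockAvg (fun i => g k i ω)‖ ^ 2 ∂P) := by
  classical
  have hGfgrad : ∀ (i : Fin n) (u : EuclideanSpace ℝ (Fin p)),
      gradient (floc f i) u = (m : ℝ)⁻¹ • ∑ j, gradient (f i j) u := GTaux.floc_grad f hdiff
  have hGfLip : ∀ i, LipschitzWith L.toNNReal (gradient (floc f i)) :=
    GTaux.floc_grad_lip hm hL f hdiff hlip
  -- MemLp facts
  have hGfxL2 : ∀ (t : ℕ) (i : Fin n), MemLp (fun ω => gradient (floc f i) (x t i ω)) 2 P :=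
    fun t i => GTaux.memLp_lip_comp (hGfLip i) (hxL2 t i)
  have haL2 : ∀ i, MemLp (fun ω => g (k+1) i ω - gradient (floc f i) (x (k+1) i ω)) 2 P :=
    fun i => (hgL2 (k+1) i).sub (hGfxL2 (k+1) i)
  have hbL2 : ∀ i, MemLp (fun ω => gradient (floc f i) (x (k+1) i ω) - g k i ω) 2 P :=
    fun i => (hGfxL2 (k+1) i).sub (hgL2 k i)
  have hdL2 : ∀ i, MemLp (fun ω => g k i ω - gradient (floc f i) (x k i ω)) 2 P :=
    fun i => (hgL2 k i).sub (hGfxL2 k i)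
  have sqInt : ∀ {F : Ω → EuclideanSpace ℝ (Fin p)}, MemLp F 2 P →
      Integrable (fun ω => ‖F ω‖ ^ 2) P := fun hF => hF.norm.integrable_sq
  -- measurability w.r.t. the past
  obtain ⟨hxG, hyG, hzG, hgG'⟩ := GTaux.meas_induction hL f hlip w τ s α x y g z x0 hx0 hz0
    hy0 hgdef hydef hxdef hzdef k (k+1) le_rfl
  have hgG : ∀ i, Measurable[bigG τ s (k+1)] (g k i) := fun i => by
    simpa using hgG' (by omega) i
  -- cross terms vanish
  have hcross : ∀ i, (∫ ω, ⟪g (k+1) i ω - gradient (floc f i) (x (k+1) i ω),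
      gradient (floc f i) (x (k+1) i ω) - g k i ω⟫ ∂P) = 0 := by
    intro i
    have hBmeas : Measurable[bigG τ s (k+1)]
        (fun ω => gradient (floc f i) (x (k+1) i ω) - g k i ω) :=
      ((hGfLip i).continuous.measurable.comp (hxG i)).sub (hgG i)
    have hz' := GTaux.cross_zero P hm hL (fun j => gradient (f i j)) (hlip i)
      (gradient (floc f i)) (hGfgrad i) (hGfLip i)
      ⟨bigG τ s (k+1), GTaux.bigG_le τ s hτmeas hsmeas (k+1)⟩
      (τ i (k+1)) (hτmeas i (k+1)) (hτunif i (k+1))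
      (GTaux.indep_bigG τ s hτmeas hsmeas hindep i k)
      (x (k+1) i) (fun j => z (k+1) i j)
      (fun ω => gradient (floc f i) (x (k+1) i ω) - g k i ω)
      (hxG i) (fun j => hzG i j) hBmeas
      (hxL2 (k+1) i) (fun j => hzL2 (k+1) i j)
      ((hGfxL2 (k+1) i).sub (hgL2 k i))
    refine Eq.trans ?_ hz'
    refine integral_congr_ae (Filter.Eventually.of_forall fun ω => ?_)
    simp only [hgdef (k+1) i]
  -- pointwise bound on the displacement
  have hΔ : ∀ ω, (∑ i, ‖x (k+1) i ω - x k i ω‖ ^ 2)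
      ≤ 9 * consSq (fun i => x k i ω) + 6 * α ^ 2 * lam ^ 2 * consSq (fun i => y (k+1) i ω)
        + 3 * α ^ 2 * n * ‖blockAvg (fun i => g k i ω)‖ ^ 2 := by
    intro ω
    have hd := GTaux.deltax_bound hn w hrow hlam hlam0 hlam1 hα0 (fun i => x k i ω)
      (fun i => y (k+1) i ω) (fun i => x (k+1) i ω) (fun i => hxdef k i ω)
    rw [GTaux.track w hcol y g hy0 hydef k ω] at hd
    exact hd
  have hGfnorm : ∀ (i : Fin n) (u v : EuclideanSpace ℝ (Fin p)),
      ‖gradient (floc f i) u - gradient (floc f i) v‖ ≤ L * ‖u - v‖ := by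
    intro i u v
    have := (hGfLip i).dist_le_mul u v
    rwa [dist_eq_norm, dist_eq_norm, Real.coe_toNNReal _ hL.le] at this
  -- pointwise bound for the b-terms
  have hbptw : ∀ (i : Fin n) (ω : Ω), ‖gradient (floc f i) (x (k+1) i ω) - g k i ω‖ ^ 2
      ≤ 2 * L ^ 2 * ‖x (k+1) i ω - x k i ω‖ ^ 2
        + 2 * ‖g k i ω - gradient (floc f i) (x k i ω)‖ ^ 2 := by
    intro i ω
    have hdecomp : gradient (floc f i) (x (k+1) i ω) - g k i ω
        = (gradient (floc f i) (x (k+1) i ω) - gradient (floc f i) (x k i ω))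
          + (gradient (floc f i) (x k i ω) - g k i ω) := (sub_add_sub_cancel _ _ _).symm
    rw [hdecomp]
    have h1 := GTaux.two_sq (gradient (floc f i) (x (k+1) i ω) - gradient (floc f i) (x k i ω))
      (gradient (floc f i) (x k i ω) - g k i ω)
    have h2 : ‖gradient (floc f i) (x (k+1) i ω) - gradient (floc f i) (x k i ω)‖ ^ 2
        ≤ (L * ‖x (k+1) i ω - x k i ω‖) ^ 2 := by
      apply pow_le_pow_left₀ (norm_nonneg _) (hGfnorm i _ _)
    have h3 : ‖gradient (floc f i) (x k i ω) - g k i ω‖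
        = ‖g k i ω - gradient (floc f i) (x k i ω)‖ := norm_sub_rev _ _
    rw [h3] at h1
    nlinarith [h1, h2]
  -- the grand pointwise inequality
  have hΦ : ∀ ω, (∑ i, (‖g (k+1) i ω - gradient (floc f i) (x (k+1) i ω)‖ ^ 2
        + ‖gradient (floc f i) (x (k+1) i ω) - g k i ω‖ ^ 2))
      ≤ (∑ i, ‖g (k+1) i ω - gradient (floc f i) (x (k+1) i ω)‖ ^ 2)
        + 18 * L ^ 2 * consSq (fun i => x k i ω)
        + 12 * lam ^ 2 * α ^ 2 * L ^ 2 * consSq (fun i => y (k+1) i ω)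
        + 6 * n * α ^ 2 * L ^ 2 * ‖blockAvg (fun i => g k i ω)‖ ^ 2
        + 2 * (∑ i, ‖g k i ω - gradient (floc f i) (x k i ω)‖ ^ 2) := by
    intro ω
    rw [Finset.sum_add_distrib]
    have hb : (∑ i, ‖gradient (floc f i) (x (k+1) i ω) - g k i ω‖ ^ 2)
        ≤ ∑ i, (2 * L ^ 2 * ‖x (k+1) i ω - x k i ω‖ ^ 2
          + 2 * ‖g k i ω - gradient (floc f i) (x k i ω)‖ ^ 2) :=
      Finset.sum_le_sum fun i _ => hbptw i ω
    rw [Finset.sum_add_distrib, ← Finset.mul_sum, ← Finset.mul_sum] at hb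
    have h3 := mul_le_mul_of_nonneg_left (hΔ ω) (show (0:ℝ) ≤ 2 * L ^ 2 by positivity)
    nlinarith [hb, h3]
  -- integrability facts
  have hintA : Integrable (fun ω =>
      ∑ i, ‖g (k+1) i ω - gradient (floc f i) (x (k+1) i ω)‖ ^ 2) P :=
    integrable_finset_sum _ fun i _ => sqInt (haL2 i)
  have hintD : Integrable (fun ω =>
      ∑ i, ‖g k i ω - gradient (floc f i) (x k i ω)‖ ^ 2) P :=
    integrable_finset_sum _ fun i _ => sqInt (hdL2 i)
  have hintAB : Integrable (fun ω =>
      ∑ i, (‖g (k+1) i ω - gradient (floc f i) (x (k+1) i ω)‖ ^ 2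
        + ‖gradient (floc f i) (x (k+1) i ω) - g k i ω‖ ^ 2)) P :=
    integrable_finset_sum _ fun i _ => (sqInt (haL2 i)).add (sqInt (hbL2 i))
  have hintCross : Integrable (fun ω =>
      ∑ i, 2 * ⟪g (k+1) i ω - gradient (floc f i) (x (k+1) i ω),
        gradient (floc f i) (x (k+1) i ω) - g k i ω⟫) P :=
    integrable_finset_sum _ fun i _ =>
      (GTaux.integrable_inner_of_memLp (haL2 i) (hbL2 i)).const_mul 2
  have hintCx : Integrable (fun ω => consSq (fun i => x k i ω)) P :=
    GTaux.consSq_integrable _ fun i => hxL2 k i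
  have hintCy : Integrable (fun ω => consSq (fun i => y (k+1) i ω)) P :=
    GTaux.consSq_integrable _ fun i => hyL2 (k+1) i
  have hintG : Integrable (fun ω => ‖blockAvg (fun i => g k i ω)‖ ^ 2) P :=
    sqInt (GTaux.blockAvg_memLp _ fun i => hgL2 k i)
  have hintΦ : Integrable (fun ω =>
      (∑ i, ‖g (k+1) i ω - gradient (floc f i) (x (k+1) i ω)‖ ^ 2)
        + 18 * L ^ 2 * consSq (fun i => x k i ω)
        + 12 * lam ^ 2 * α ^ 2 * L ^ 2 * consSq (fun i => y (k+1) i ω)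
        + 6 * n * α ^ 2 * L ^ 2 * ‖blockAvg (fun i => g k i ω)‖ ^ 2
        + 2 * (∑ i, ‖g k i ω - gradient (floc f i) (x k i ω)‖ ^ 2)) P :=
    ((((hintA.add (hintCx.const_mul _)).add (hintCy.const_mul _)).add
      (hintG.const_mul _)).add (hintD.const_mul 2))
  -- the pointwise splitting of the left-hand side
  have hsplit : ∀ ω, (∑ i, ‖g (k + 1) i ω - g k i ω‖ ^ 2)
      = (∑ i, (‖g (k+1) i ω - gradient (floc f i) (x (k+1) i ω)‖ ^ 2
          + ‖gradient (floc f i) (x (k+1) i ω) - g k i ω‖ ^ 2))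
        + ∑ i, 2 * ⟪g (k+1) i ω - gradient (floc f i) (x (k+1) i ω),
            gradient (floc f i) (x (k+1) i ω) - g k i ω⟫ := by
    intro ω
    rw [← Finset.sum_add_distrib]
    refine Finset.sum_congr rfl fun i _ => ?_
    have hab : g (k+1) i ω - g k i ω
        = (g (k+1) i ω - gradient (floc f i) (x (k+1) i ω))
          + (gradient (floc f i) (x (k+1) i ω) - g k i ω) := (sub_add_sub_cancel _ _ _).symm
    rw [hab, norm_add_sq_real]
    ring
  have hcross0 : (∫ ω, ∑ i, 2 * ⟪g (k+1) i ω - gradient (floc f i) (x (k+1) i ω),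
      gradient (floc f i) (x (k+1) i ω) - g k i ω⟫ ∂P) = 0 := by
    rw [integral_finset_sum _ fun i _ =>
      (GTaux.integrable_inner_of_memLp (haL2 i) (hbL2 i)).const_mul 2]
    refine Finset.sum_eq_zero fun i _ => ?_
    rw [integral_const_mul, hcross i, mul_zero]
  calc (∫ ω, ∑ i, ‖g (k + 1) i ω - g k i ω‖ ^ 2 ∂P)
      = ∫ ω, ((∑ i, (‖g (k+1) i ω - gradient (floc f i) (x (k+1) i ω)‖ ^ 2
          + ‖gradient (floc f i) (x (k+1) i ω) - g k i ω‖ ^ 2))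
        + ∑ i, 2 * ⟪g (k+1) i ω - gradient (floc f i) (x (k+1) i ω),
            gradient (floc f i) (x (k+1) i ω) - g k i ω⟫) ∂P :=
        integral_congr_ae (Filter.Eventually.of_forall hsplit)
    _ = (∫ ω, ∑ i, (‖g (k+1) i ω - gradient (floc f i) (x (k+1) i ω)‖ ^ 2
          + ‖gradient (floc f i) (x (k+1) i ω) - g k i ω‖ ^ 2) ∂P)
        + ∫ ω, ∑ i, 2 * ⟪g (k+1) i ω - gradient (floc f i) (x (k+1) i ω),
            gradient (floc f i) (x (k+1) i ω) - g k i ω⟫ ∂P :=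
        integral_add hintAB hintCross
    _ = ∫ ω, ∑ i, (‖g (k+1) i ω - gradient (floc f i) (x (k+1) i ω)‖ ^ 2
          + ‖gradient (floc f i) (x (k+1) i ω) - g k i ω‖ ^ 2) ∂P := by
        rw [hcross0, add_zero]
    _ ≤ ∫ ω, ((∑ i, ‖g (k+1) i ω - gradient (floc f i) (x (k+1) i ω)‖ ^ 2)
        + 18 * L ^ 2 * consSq (fun i => x k i ω)
        + 12 * lam ^ 2 * α ^ 2 * L ^ 2 * consSq (fun i => y (k+1) i ω)
        + 6 * n * α ^ 2 * L ^ 2 * ‖blockAvg (fun i => g k i ω)‖ ^ 2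
        + 2 * (∑ i, ‖g k i ω - gradient (floc f i) (x k i ω)‖ ^ 2)) ∂P :=
        integral_mono hintAB hintΦ fun ω => hΦ ω
    _ = (∫ ω, ∑ i, ‖g (k+1) i ω - gradient (floc f i) (x (k+1) i ω)‖ ^ 2 ∂P)
        + 18 * L ^ 2 * (∫ ω, consSq (fun i => x k i ω) ∂P)
        + 12 * lam ^ 2 * α ^ 2 * L ^ 2 * (∫ ω, consSq (fun i => y (k+1) i ω) ∂P)
        + 6 * n * α ^ 2 * L ^ 2 * (∫ ω, ‖blockAvg (fun i => g k i ω)‖ ^ 2 ∂P)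
        + 2 * (∫ ω, ∑ i, ‖g k i ω - gradient (floc f i) (x k i ω)‖ ^ 2 ∂P) := by
        have hintCx2 : Integrable (fun ω => 18 * L ^ 2 * consSq (fun i => x k i ω)) P :=
          hintCx.const_mul _
        have hintCy2 : Integrable
            (fun ω => 12 * lam ^ 2 * α ^ 2 * L ^ 2 * consSq (fun i => y (k+1) i ω)) P :=
          hintCy.const_mul _
        have hintG2 : Integrable
            (fun ω => 6 * n * α ^ 2 * L ^ 2 * ‖blockAvg (fun i => g k i ω)‖ ^ 2) P :=
          hintG.const_mul _
        have hintD2 : Integrable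
            (fun ω => 2 * ∑ i, ‖g k i ω - gradient (floc f i) (x k i ω)‖ ^ 2) P :=
          hintD.const_mul 2
        have hint2 : Integrable (fun ω =>
            (∑ i, ‖g (k+1) i ω - gradient (floc f i) (x (k+1) i ω)‖ ^ 2)
              + 18 * L ^ 2 * consSq (fun i => x k i ω)) P := hintA.add hintCx2
        have hint3 : Integrable (fun ω =>
            (∑ i, ‖g (k+1) i ω - gradient (floc f i) (x (k+1) i ω)‖ ^ 2)
              + 18 * L ^ 2 * consSq (fun i => x k i ω)
              + 12 * lam ^ 2 * α ^ 2 * L ^ 2 * consSq (fun i => y (k+1) i ω)) P :=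
          hint2.add hintCy2
        have hint4 : Integrable (fun ω =>
            (∑ i, ‖g (k+1) i ω - gradient (floc f i) (x (k+1) i ω)‖ ^ 2)
              + 18 * L ^ 2 * consSq (fun i => x k i ω)
              + 12 * lam ^ 2 * α ^ 2 * L ^ 2 * consSq (fun i => y (k+1) i ω)
              + 6 * n * α ^ 2 * L ^ 2 * ‖blockAvg (fun i => g k i ω)‖ ^ 2) P :=
          hint3.add hintG2
        rw [integral_add hint4 hintD2, integral_add hint3 hintG2, integral_add hint2 hintCy2,
          integral_add hintA hintCx2,
          integral_const_mul, integral_const_mul, integral_const_mul, integral_const_mul]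
    _ ≤ 12 * lam ^ 2 * α ^ 2 * L ^ 2 * (∫ ω, consSq (fun i => y (k + 1) i ω) ∂P)
        + 2 * (∫ ω, ∑ i, ‖g k i ω - gradient (floc f i) (x k i ω)‖ ^ 2 ∂P)
        + (∫ ω, ∑ i, ‖g (k + 1) i ω - gradient (floc f i) (x (k + 1) i ω)‖ ^ 2 ∂P)
        + 18 * L ^ 2 * (∫ ω, consSq (fun i => x k i ω) ∂P)
        + 6 * n * α ^ 2 * L ^ 2 * (∫ ω, ‖blockAvg (fun i => g k i ω)‖ ^ 2 ∂P) := by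
        linarith

end
end

section
/- Let n ≥ 1, m ≥ 1, L > 0, λ ∈ [0,1), and let G_α be the 3×3 real matrix with rows [ (1+λ²)/2, 0, 2λ²α²L²/(1−λ²) ], [ 9/(4m), 1 − 1/(4m), 0 ], [ 30.5/(1−λ²), 97/8, (1+λ²)/2 ]. If 0 < α ≤ min{(1−λ²)²/(35λ), √n/√(8m)}·(1/L) (the λ-term interpreted as +∞ when λ = 0), then the spectral radius of G_α is strictly less than 1, and consequently Σ_{k=0}^∞ G_α^k = (I₃ − G_α)^{−1}. -/
open MeasureTheory ProbabilityTheory Finset Filter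
open scoped ENNReal RealInnerProductSpace

noncomputable section

lemma key_nonneg_pow {N : ℕ} (G : Matrix (Fin N) (Fin N) ℝ)
    (hG : ∀ i j, 0 ≤ G i j) (k : ℕ) : ∀ i j, 0 ≤ (G ^ k) i j := by
  induction k with
  | zero => intro i j; simp [Matrix.one_apply]; positivity
  | succ k ih =>
    intro i j
    rw [pow_succ, Matrix.mul_apply]
    exact Finset.sum_nonneg fun r _ => mul_nonneg (ih i r) (hG r j)

lemma key_spectral {N : ℕ} (hN : 0 < N) (G : Matrix (Fin N) (Fin N) ℝ)
    (hG : ∀ i j, 0 ≤ G i j) (v : Fin N → ℝ) (hv : ∀ i, 0 < v i)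
    (hGv : ∀ i, G.mulVec v i < v i) :
    (∀ c ∈ spectrum ℂ (G.map (algebraMap ℝ ℂ)), ‖c‖ < 1) ∧
      (∑' k : ℕ, G ^ k) = (1 - G)⁻¹ := by
  haveI : Nonempty (Fin N) := ⟨⟨0, hN⟩⟩
  constructor
  · -- eigenvalue bound
    intro c hc
    rw [spectrum.mem_iff] at hc
    set Gc := G.map (algebraMap ℝ ℂ) with hGc
    have hdet : (algebraMap ℂ (Matrix (Fin N) (Fin N) ℂ) c - Gc).det = 0 := by
      by_contra h
      exact hc ((Matrix.isUnit_iff_isUnit_det _).2 (isUnit_iff_ne_zero.2 h))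
    obtain ⟨x, hx0, hx⟩ := (Matrix.exists_mulVec_eq_zero_iff).2 hdet
    have hev : ∀ i, Gc.mulVec x i = c * x i := by
      intro i
      have h := congrFun hx i
      simp [Matrix.sub_mulVec, Algebra.algebraMap_eq_smul_one, Matrix.smul_mulVec,
        Matrix.one_mulVec, sub_eq_zero, Pi.smul_apply, smul_eq_mul, Pi.sub_apply] at h
      exact h.symm
    obtain ⟨i₀, -, hi₀⟩ := Finset.exists_max_image Finset.univ
      (fun i => ‖x i‖ / v i) ⟨Classical.arbitrary _, Finset.mem_univ _⟩
    set t := ‖x i₀‖ / v i₀ with ht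
    have hle : ∀ j, ‖x j‖ ≤ t * v j := by
      intro j
      have := hi₀ j (Finset.mem_univ j)
      calc ‖x j‖ = ‖x j‖ / v j * v j := (div_mul_cancel₀ _ (hv j).ne').symm
        _ ≤ t * v j := mul_le_mul_of_nonneg_right this (hv j).le
    have ht0 : 0 < t := by
      obtain ⟨j, hj⟩ := Function.ne_iff.1 hx0
      have : 0 < ‖x j‖ / v j := div_pos (norm_pos_iff.2 hj) (hv j)
      exact lt_of_lt_of_le this (hi₀ j (Finset.mem_univ j))
    have hxi₀ : ‖x i₀‖ = t * v i₀ := by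
      rw [ht, div_mul_cancel₀ _ (hv i₀).ne']
    have hbound : ‖c‖ * (t * v i₀) < t * v i₀ := by
      calc ‖c‖ * (t * v i₀) = ‖c * x i₀‖ := by rw [norm_mul, hxi₀]
        _ = ‖Gc.mulVec x i₀‖ := by rw [hev]
        _ = ‖∑ j, Gc i₀ j * x j‖ := by rw [Matrix.mulVec]; rfl
        _ ≤ ∑ j, ‖Gc i₀ j * x j‖ := norm_sum_le _ _
        _ = ∑ j, G i₀ j * ‖x j‖ := by
            refine Finset.sum_congr rfl fun j _ => ?_
            rw [norm_mul]
            congr 1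
            simp [hGc, Matrix.map_apply, Complex.norm_real, abs_of_nonneg (hG i₀ j)]
        _ ≤ ∑ j, G i₀ j * (t * v j) :=
            Finset.sum_le_sum fun j _ =>
              mul_le_mul_of_nonneg_left (hle j) (hG i₀ j)
        _ = t * ∑ j, G i₀ j * v j := by
            rw [Finset.mul_sum]
            exact Finset.sum_congr rfl fun j _ => by ring
        _ = t * (G.mulVec v i₀) := rfl
        _ < t * v i₀ := by
            exact mul_lt_mul_of_pos_left (hGv i₀) ht0
    have hpos : 0 < t * v i₀ := mul_pos ht0 (hv i₀)
    nlinarith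
  · -- Neumann series
    set θ : ℝ := Finset.univ.sup' Finset.univ_nonempty (fun i => G.mulVec v i / v i) with hθ
    have hθ1 : θ < 1 := by
      rw [hθ, Finset.sup'_lt_iff]
      intro i _
      exact (div_lt_one (hv i)).2 (hGv i)
    have hθle : ∀ i, G.mulVec v i ≤ θ * v i := by
      intro i
      have : G.mulVec v i / v i ≤ θ :=
        Finset.le_sup' (fun i => G.mulVec v i / v i) (Finset.mem_univ i)
      calc G.mulVec v i = G.mulVec v i / v i * v i := (div_mul_cancel₀ _ (hv i).ne').symm
        _ ≤ θ * v i := mul_le_mul_of_nonneg_right this (hv i).le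
    have hθ0 : 0 ≤ θ := by
      have h0 : 0 ≤ ∑ j, G ⟨0, hN⟩ j * v j :=
        Finset.sum_nonneg fun j _ => mul_nonneg (hG _ j) (hv j).le
      have h1 : 0 ≤ G.mulVec v ⟨0, hN⟩ := h0
      have := hθle ⟨0, hN⟩
      nlinarith [hv (⟨0, hN⟩ : Fin N)]
    have hkey : ∀ k i, (G ^ k).mulVec v i ≤ θ ^ k * v i := by
      intro k
      induction k with
      | zero => intro i; simp [Matrix.one_mulVec]
      | succ k ih =>
        intro i
        rw [pow_succ']
        rw [← Matrix.mulVec_mulVec]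
        calc G.mulVec ((G ^ k).mulVec v) i
            = ∑ j, G i j * (G ^ k).mulVec v j := rfl
          _ ≤ ∑ j, G i j * (θ ^ k * v j) :=
              Finset.sum_le_sum fun j _ =>
                mul_le_mul_of_nonneg_left (ih j) (hG i j)
          _ = θ ^ k * ∑ j, G i j * v j := by
              rw [Finset.mul_sum]
              exact Finset.sum_congr rfl fun j _ => by ring
          _ = θ ^ k * G.mulVec v i := rfl
          _ ≤ θ ^ k * (θ * v i) :=
              mul_le_mul_of_nonneg_left (hθle i) (pow_nonneg hθ0 k)
          _ = θ ^ (k + 1) * v i := by ring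
    have hij : ∀ k i j, (G ^ k) i j ≤ θ ^ k * v i / v j := by
      intro k i j
      have h1 : (G ^ k) i j * v j ≤ (G ^ k).mulVec v i := by
        rw [Matrix.mulVec]
        refine Finset.single_le_sum (f := fun j => (G ^ k) i j * v j) ?_ (Finset.mem_univ j)
        exact fun r _ => mul_nonneg (key_nonneg_pow G hG k i r) (hv r).le
      rw [le_div_iff₀ (hv j)]
      exact h1.trans (hkey k i)
    -- summability
    have hsum : Summable (fun k : ℕ => G ^ k) := by
      refine Pi.summable.2 ?_
      intro i
      rw [Pi.summable]
      intro j
      apply Summable.of_nonneg_of_le (fun k => key_nonneg_pow G hG k i j)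
        (fun k => hij k i j)
      simpa [div_eq_mul_inv, mul_comm, mul_assoc, mul_left_comm] using
        (summable_geometric_of_lt_one hθ0 hθ1).mul_right (v i / v j)
    have htend : Tendsto (fun k : ℕ => G ^ k) atTop (nhds 0) := by
      refine tendsto_pi_nhds.2 ?_
      intro i
      rw [tendsto_pi_nhds]
      intro j
      have h0 : Tendsto (fun k : ℕ => θ ^ k * v i / v j) atTop (nhds 0) := by
        have := (tendsto_pow_atTop_nhds_zero_of_lt_one hθ0 hθ1).mul_const (v i / v j)
        simpa [mul_div_assoc] using this
      refine squeeze_zero (fun k => key_nonneg_pow G hG k i j) (fun k => hij k i j) h0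
    have hS := hsum.hasSum
    have h2 : HasSum (fun k : ℕ => (1 - G) * G ^ k) ((1 - G) * ∑' k : ℕ, G ^ k) :=
      hS.mul_left (1 - G)
    have h3 : (fun k : ℕ => (1 - G) * G ^ k) = fun k => G ^ k - G ^ (k + 1) := by
      funext k
      rw [sub_mul, one_mul, pow_succ']
    rw [h3] at h2
    have h4 := h2.tendsto_sum_nat
    have h5 : (fun N : ℕ => ∑ k ∈ Finset.range N, (G ^ k - G ^ (k + 1)))
        = fun N => 1 - G ^ N := by
      funext N
      rw [Finset.sum_range_sub' (fun k => G ^ k)]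
      simp
    rw [h5] at h4
    have h6 : Tendsto (fun N : ℕ => (1 : Matrix (Fin _) (Fin _) ℝ) - G ^ N) atTop
        (nhds (1 - 0)) := tendsto_const_nhds.sub htend
    have h7 : (1 - G) * (∑' k : ℕ, G ^ k) = 1 := by
      have := tendsto_nhds_unique h4 h6
      simpa using this
    exact (Matrix.inv_eq_right_inv h7).symm


set_option maxHeartbeats 1600000 in
/-- Spectral radius of the GT-SAGA LTI matrix `G_α` is less than one for small step-sizes,
hence its Neumann series converges to `(I - G_α)⁻¹`. -/
theorem gtsaga_G_spectral_radius_lt_one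
    (n m : ℕ) (hn : 1 ≤ n) (hm : 1 ≤ m) (L lam α : ℝ) (hL : 0 < L)
    (hlam0 : 0 ≤ lam) (hlam1 : lam < 1) (hα0 : 0 < α)
    (hα1 : lam ≠ 0 → α ≤ (1 - lam ^ 2) ^ 2 / (35 * lam) * (1 / L))
    (hα2 : α ≤ Real.sqrt n / Real.sqrt (8 * m) * (1 / L)) :
    let G : Matrix (Fin 3) (Fin 3) ℝ :=
      !![(1 + lam ^ 2) / 2, 0, 2 * lam ^ 2 * α ^ 2 * L ^ 2 / (1 - lam ^ 2);
         9 / (4 * m), 1 - 1 / (4 * m), 0;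
         30.5 / (1 - lam ^ 2), 97 / 8, (1 + lam ^ 2) / 2]
    (∀ c ∈ spectrum ℂ (G.map (algebraMap ℝ ℂ)), ‖c‖ < 1) ∧
      (∑' k : ℕ, G ^ k) = (1 - G)⁻¹ := by
  intro G
  have hs0 : 0 < 1 - lam ^ 2 := by nlinarith
  have hs1 : 1 - lam ^ 2 ≤ 1 := by nlinarith
  have hm' : (1 : ℝ) ≤ (m : ℝ) := by exact_mod_cast hm
  have hm0 : (0 : ℝ) < (m : ℝ) := by linarith
  have hminv : ((m : ℝ))⁻¹ ≤ 1 := by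
    have := (div_le_one hm0).2 hm'
    simpa [one_div] using this
  have hminv0 : (0 : ℝ) ≤ ((m : ℝ))⁻¹ := inv_nonneg.2 hm0.le
  have hb : lam ^ 2 * α ^ 2 * L ^ 2 ≤ (1 - lam ^ 2) ^ 4 / 1225 := by
    rcases eq_or_ne lam 0 with h | h
    · rw [h]
      have : (0:ℝ) < (1 - lam ^ 2) ^ 4 / 1225 := by positivity
      nlinarith
    · have hlam : 0 < lam := lt_of_le_of_ne hlam0 (Ne.symm h)
      have h1 := hα1 h
      have hαL : α * L ≤ (1 - lam ^ 2) ^ 2 / (35 * lam) := by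
        have h2 := mul_le_mul_of_nonneg_right h1 hL.le
        calc α * L ≤ (1 - lam ^ 2) ^ 2 / (35 * lam) * (1 / L) * L := h2
          _ = (1 - lam ^ 2) ^ 2 / (35 * lam) := by field_simp
      have h35 : 0 < 35 * lam := by linarith
      have h3 : α * L * (35 * lam) ≤ (1 - lam ^ 2) ^ 2 :=
        (le_div_iff₀ h35).1 hαL
      have h0 : 0 ≤ α * L * (35 * lam) := by positivity
      have h4 := mul_self_le_mul_self h0 h3
      rw [le_div_iff₀ (by norm_num : (0:ℝ) < 1225)]
      nlinarith
  have hb' : 2 * lam ^ 2 * α ^ 2 * L ^ 2 / (1 - lam ^ 2) ≤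
      2 * (1 - lam ^ 2) ^ 3 / 1225 := by
    rw [div_le_div_iff₀ hs0 (by norm_num : (0:ℝ) < 1225)]
    nlinarith
  have hbnn : 0 ≤ 2 * lam ^ 2 * α ^ 2 * L ^ 2 / (1 - lam ^ 2) :=
    div_nonneg (by positivity) hs0.le
  set v : Fin 3 → ℝ := ![(1 - lam ^ 2) ^ 2, 10 * (1 - lam ^ 2) ^ 2, 304] with hv
  have hvpos : ∀ i, 0 < v i := by
    intro i
    fin_cases i <;> simp [hv] <;> positivity
  have hGnn : ∀ i j, 0 ≤ G i j := by
    intro i j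
    fin_cases i <;> fin_cases j
    · show (0:ℝ) ≤ (1 + lam ^ 2) / 2
      positivity
    · show (0:ℝ) ≤ (0:ℝ)
      exact le_refl 0
    · show (0:ℝ) ≤ 2 * lam ^ 2 * α ^ 2 * L ^ 2 / (1 - lam ^ 2)
      exact hbnn
    · show (0:ℝ) ≤ 9 / (4 * (m:ℝ))
      positivity
    · show (0:ℝ) ≤ 1 - 1 / (4 * (m:ℝ))
      rw [sub_nonneg, div_le_one (by linarith : (0:ℝ) < 4 * (m:ℝ))]
      linarith
    · show (0:ℝ) ≤ (0:ℝ)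
      exact le_refl 0
    · show (0:ℝ) ≤ 30.5 / (1 - lam ^ 2)
      exact div_nonneg (by norm_num) hs0.le
    · show (0:ℝ) ≤ 97 / 8
      norm_num
    · show (0:ℝ) ≤ (1 + lam ^ 2) / 2
      positivity
  have hGv : ∀ i, G.mulVec v i < v i := by
    intro i
    fin_cases i <;>
      simp [G, hv, Matrix.mulVec, dotProduct, Fin.sum_univ_three]
    · nlinarith [hb', hs0, pow_pos hs0 3]
    · have hu : 9 / (4 * (m:ℝ)) = 9 * ((m:ℝ)⁻¹ * 4⁻¹) := by
        rw [div_eq_mul_inv, mul_inv]; ring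
      rw [hu]
      have hup : (0:ℝ) < (m:ℝ)⁻¹ * 4⁻¹ := by positivity
      nlinarith [mul_pos hup (pow_pos hs0 2)]
    · have h30 : (30.5:ℝ) / (1 - lam ^ 2) * (1 - lam ^ 2) ^ 2
          = 30.5 * (1 - lam ^ 2) := by
        field_simp
      rw [h30]
      nlinarith [hs0, hs1, mul_pos hs0 hs0]
  obtain ⟨h1, h2⟩ := key_spectral (by norm_num) G hGnn v hvpos hGv
  exact ⟨h1, h2⟩


end
end
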